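/- Let A be a complex Banach *-algebra with identity and let a, b ∈ A both have generalized core-EP inverses a^⊕, b^⊕. Suppose λ, μ ∈ ℂ \ {0} with a b = λ b a and a* b = μ b a*. Then a b has a generalized core-EP inverse and (ab)^⊕ = b^⊕ a^⊕ = λ^{-1} a^⊕ b^⊕. -/

import Mathlib

open Filter Topology

set_option linter.unusedSectionVars false
set_option linter.unusedVariables false
set_option maxHeartbeats 1000000

variable {A : Type*} [NormedRing A] [StarRing A] [NormedAlgebra ℂ A] [StarModule ℂ A]
  [CompleteSpace A]

/-- quasinilpotent: `lim ‖z^n‖^(1/n) = 0` -/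
def IsQNil (z : A) : Prop :=
  Tendsto (fun n : ℕ => ‖z ^ n‖ ^ ((1 : ℝ) / n)) atTop (𝓝 0)

/-- generalized Drazin inverse -/
def IsGD (a x : A) : Prop :=
  a * x ^ 2 = x ∧ a * x = x * a ∧ IsQNil (a - a ^ 2 * x)

/-- generalized core-EP inverse -/
def IsGCEP (a x : A) : Prop :=
  x = a * x ^ 2 ∧ star (a * x) = a * x ∧
    Tendsto (fun n : ℕ => ‖a ^ n - x * a ^ (n + 1)‖ ^ ((1 : ℝ) / n)) atTop (𝓝 0)

/-- geometric smallness: faster than any geometric decay -/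
def GSmall (z : ℕ → A) : Prop :=
  ∀ δ : ℝ, 0 < δ → ∃ C : ℝ, 1 ≤ C ∧ ∀ n : ℕ, ‖z n‖ ≤ C * δ ^ n

lemma gsmall_of_eventually {z : ℕ → A}
    (h : ∀ δ : ℝ, 0 < δ → ∃ C : ℝ, 1 ≤ C ∧ ∀ᶠ n in atTop, ‖z n‖ ≤ C * δ ^ n) :
    GSmall z := by
  intro δ hδ
  obtain ⟨C, hC1, hC⟩ := h δ hδ
  obtain ⟨N, hN⟩ := eventually_atTop.1 hC
  refine ⟨C + ∑ i ∈ Finset.range N, ‖z i‖ / δ ^ i, ?_, fun n => ?_⟩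
  · have : (0:ℝ) ≤ ∑ i ∈ Finset.range N, ‖z i‖ / δ ^ i :=
      Finset.sum_nonneg fun i _ => by positivity
    linarith
  rcases le_or_gt N n with hn | hn
  · have := hN n hn
    have h2 : 0 ≤ (∑ i ∈ Finset.range N, ‖z i‖ / δ ^ i) * δ ^ n := by positivity
    nlinarith [pow_pos hδ n]
  · have hterm : ‖z n‖ / δ ^ n ≤ ∑ i ∈ Finset.range N, ‖z i‖ / δ ^ i :=
      Finset.single_le_sum (f := fun i => ‖z i‖ / δ ^ i)
        (fun i _ => by positivity) (Finset.mem_range.2 hn)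
    have hpow : (0:ℝ) < δ ^ n := pow_pos hδ n
    have : ‖z n‖ ≤ (∑ i ∈ Finset.range N, ‖z i‖ / δ ^ i) * δ ^ n := by
      rw [div_le_iff₀ hpow] at hterm; linarith
    nlinarith [pow_pos hδ n]

lemma rpow_root_pow {x : ℝ} (hx : 0 ≤ x) {n : ℕ} (hn : 1 ≤ n) :
    (x ^ ((1:ℝ) / n)) ^ n = x := by
  have hn' : (n : ℝ) ≠ 0 := Nat.cast_ne_zero.2 (by omega)
  rw [← Real.rpow_natCast (x ^ ((1:ℝ)/n)) n, ← Real.rpow_mul hx, one_div,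
    inv_mul_cancel₀ hn', Real.rpow_one]

lemma gsmall_of_tendsto {z : ℕ → A}
    (h : Tendsto (fun n : ℕ => ‖z n‖ ^ ((1 : ℝ) / n)) atTop (𝓝 0)) : GSmall z := by
  apply gsmall_of_eventually
  intro δ hδ
  refine ⟨1, le_refl 1, ?_⟩
  have h1 : ∀ᶠ n in atTop, ‖z n‖ ^ ((1:ℝ)/n) < δ := h.eventually_lt_const hδ
  filter_upwards [h1, eventually_ge_atTop 1] with n hlt hn
  have : (‖z n‖ ^ ((1:ℝ)/n)) ^ n ≤ δ ^ n :=
    pow_le_pow_left₀ (Real.rpow_nonneg (norm_nonneg _) _) hlt.le n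
  rw [rpow_root_pow (norm_nonneg _) hn] at this
  simpa using this

lemma tendsto_of_gsmall {z : ℕ → A} (h : GSmall z) :
    Tendsto (fun n : ℕ => ‖z n‖ ^ ((1 : ℝ) / n)) atTop (𝓝 0) := by
  rw [Metric.tendsto_atTop]
  intro ε hε
  obtain ⟨C, hC1, hC⟩ := h (ε / 3) (by positivity)
  have h2 : ∀ᶠ n : ℕ in atTop, C ≤ 2 ^ n :=
    (tendsto_pow_atTop_atTop_of_one_lt (by norm_num : (1:ℝ) < 2)).eventually_ge_atTop C
  obtain ⟨N, hN⟩ := eventually_atTop.1 (h2.and (eventually_ge_atTop 1))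
  refine ⟨N, fun n hn => ?_⟩
  obtain ⟨hCn, hn1⟩ := hN n hn
  have hb : ‖z n‖ ≤ (2 * (ε/3)) ^ n := by
    calc ‖z n‖ ≤ C * (ε/3) ^ n := hC n
    _ ≤ 2 ^ n * (ε/3) ^ n := by
        have : (0:ℝ) ≤ (ε/3)^n := by positivity
        nlinarith
    _ = (2 * (ε/3)) ^ n := (mul_pow _ _ _).symm
  have hr : ‖z n‖ ^ ((1:ℝ)/n) ≤ ((2 * (ε/3)) ^ n) ^ ((1:ℝ)/n) :=
    Real.rpow_le_rpow (norm_nonneg _) hb (by positivity)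
  have heq : (((2 * (ε/3)) ^ n : ℝ)) ^ ((1:ℝ)/n) = 2 * (ε/3) := by
    have h0 : (0:ℝ) ≤ 2 * (ε/3) := by positivity
    have hn' : (n:ℝ) ≠ 0 := Nat.cast_ne_zero.2 (by omega)
    rw [← Real.rpow_natCast (2 * (ε/3)) n, ← Real.rpow_mul h0,
      mul_one_div, div_self hn', Real.rpow_one]
  rw [heq] at hr
  have hnn : 0 ≤ ‖z n‖ ^ ((1:ℝ)/n) := Real.rpow_nonneg (norm_nonneg _) _
  rw [Real.dist_eq, sub_zero, abs_of_nonneg hnn]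
  linarith

/-- kill lemma -/
lemma eq_zero_of_gsmall_bound {w : A} {z : ℕ → A} (hz : GSmall z) (C₁ C₂ : ℝ)
    (hC₂ : 0 ≤ C₂) (h : ∀ n : ℕ, 1 ≤ n → ‖w‖ ≤ C₁ * (‖z n‖ * C₂ ^ n)) : w = 0 := by
  have hδ : (0:ℝ) < 1 / (C₂ + 1) := by positivity
  obtain ⟨C, hC1, hC⟩ := hz _ hδ
  set r : ℝ := C₂ / (C₂ + 1) with hr
  have hr0 : 0 ≤ r := by positivity
  have hr1 : r < 1 := by rw [hr, div_lt_one (by linarith)]; linarith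
  set D : ℝ := max C₁ 0 with hD
  have hD0 : 0 ≤ D := le_max_right _ _
  have hbound : ∀ᶠ n : ℕ in atTop, ‖w‖ ≤ D * C * r ^ n := by
    filter_upwards [eventually_ge_atTop 1] with n hn
    have h1 : ‖w‖ ≤ D * (‖z n‖ * C₂ ^ n) := by
      refine (h n hn).trans (mul_le_mul_of_nonneg_right (le_max_left _ _) ?_)
      positivity
    have h2 : ‖z n‖ * C₂ ^ n ≤ C * (1/(C₂+1)) ^ n * C₂ ^ n := by
      have := hC n
      nlinarith [pow_nonneg hC₂ n]
    have h3 : (1/(C₂+1) : ℝ) ^ n * C₂ ^ n = r ^ n := by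
      rw [← mul_pow, hr]; ring_nf
    calc ‖w‖ ≤ D * (‖z n‖ * C₂ ^ n) := h1
    _ ≤ D * (C * (1/(C₂+1)) ^ n * C₂ ^ n) := by nlinarith
    _ = D * (C * ((1/(C₂+1)) ^ n * C₂ ^ n)) := by ring
    _ = D * C * r ^ n := by rw [h3]; ring
  have hlim : Tendsto (fun n : ℕ => D * C * r ^ n) atTop (𝓝 0) := by
    simpa using (tendsto_pow_atTop_nhds_zero_of_lt_one hr0 hr1).const_mul (D * C)
  have : ‖w‖ ≤ 0 := ge_of_tendsto hlim hbound
  simpa using le_antisymm this (norm_nonneg w)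

lemma twist_symm {u v : A} {γ : ℂ} (hγ : γ ≠ 0) (h : u * v = γ • (v * u)) :
    v * u = γ⁻¹ • (u * v) := by
  rw [h, smul_smul, inv_mul_cancel₀ hγ, one_smul]

lemma twist_pow {u v : A} {γ : ℂ} (h : u * v = γ • (v * u)) :
    ∀ n : ℕ, u * v ^ n = γ ^ n • (v ^ n * u)
  | 0 => by simp
  | (n+1) => by
    rw [pow_succ, ← mul_assoc, twist_pow h n, smul_mul_assoc, mul_assoc, h,
      mul_smul_comm, smul_smul, ← mul_assoc, ← pow_succ, ← pow_succ]

lemma pow_ts {s t : A} {γ : ℂ} (h : s * t = γ • (t * s)) :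
    ∀ n : ℕ, ∃ k : ℕ, (t * s) ^ n = γ ^ k • (t ^ n * s ^ n)
  | 0 => ⟨0, by simp⟩
  | (n+1) => by
    obtain ⟨k, hk⟩ := pow_ts h n
    refine ⟨k + n, ?_⟩
    calc (t*s)^(n+1) = (t*s) * (t*s)^n := pow_succ' _ _
    _ = γ ^ k • (t * (s * t ^ n) * s ^ n) := by
        rw [hk, mul_smul_comm]; congr 1; noncomm_ring
    _ = γ ^ k • (t * (γ ^ n • (t ^ n * s)) * s ^ n) := by rw [twist_pow h n]
    _ = γ ^ (k+n) • (t ^ (n+1) * s ^ (n+1)) := by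
        rw [mul_smul_comm, smul_mul_assoc, smul_smul, ← pow_add]
        congr 1
        rw [pow_succ' t, pow_succ' s]
        noncomm_ring

lemma ts_pow_succ (s t : A) : ∀ n : ℕ, (t * s) ^ (n + 1) = t * (s * t) ^ n * s
  | 0 => by simp
  | (n+1) => by
    rw [pow_succ' (t*s), ts_pow_succ s t n, pow_succ' (s*t)]
    noncomm_ring

lemma gsmall_of_pos_bound {z : ℕ → A}
    (h : ∀ δ : ℝ, 0 < δ → ∃ C : ℝ, 1 ≤ C ∧ ∀ n : ℕ, 1 ≤ n → ‖z n‖ ≤ C * δ ^ n) :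
    GSmall z := by
  intro δ hδ
  obtain ⟨C, hC1, hC⟩ := h δ hδ
  refine ⟨C + ‖z 0‖, by linarith [norm_nonneg (z 0)], fun n => ?_⟩
  rcases Nat.eq_zero_or_pos n with rfl | hn
  · simpa using by linarith [hC1]
  · have := hC n hn
    nlinarith [norm_nonneg (z 0), pow_pos hδ n, pow_nonneg hδ.le n]

lemma gsmall_congr {z w : ℕ → A} (hz : GSmall z) (h : ∀ n : ℕ, 1 ≤ n → w n = z n) :
    GSmall w := by
  apply gsmall_of_pos_bound
  intro δ hδ
  obtain ⟨C, hC1, hC⟩ := hz δ hδ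
  exact ⟨C, hC1, fun n hn => by rw [h n hn]; exact hC n⟩

lemma gsmall_transfer {s t : A} (h : GSmall (fun n => (s * t) ^ n)) :
    GSmall (fun n => (t * s) ^ n) := by
  apply gsmall_of_pos_bound
  intro δ hδ
  obtain ⟨C, hC1, hC⟩ := h δ hδ
  have hnn : (0:ℝ) ≤ C * (‖t‖ * ‖s‖) / δ := by positivity
  refine ⟨C * (‖t‖ * ‖s‖) / δ + 1, by linarith, fun n hn => ?_⟩
  obtain ⟨k, rfl⟩ := Nat.exists_eq_add_of_le hn
  rw [add_comm 1 k, ts_pow_succ]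
  have hCk : ‖(s*t) ^ k‖ ≤ C * δ ^ k := hC k
  calc ‖t * (s*t) ^ k * s‖ ≤ ‖t * (s*t)^k‖ * ‖s‖ := norm_mul_le _ _
  _ ≤ ‖t‖ * ‖(s*t)^k‖ * ‖s‖ :=
      mul_le_mul_of_nonneg_right (norm_mul_le _ _) (norm_nonneg s)
  _ ≤ ‖t‖ * (C * δ ^ k) * ‖s‖ :=
      mul_le_mul_of_nonneg_right
        (mul_le_mul_of_nonneg_left hCk (norm_nonneg t)) (norm_nonneg s)
  _ = (C * (‖t‖ * ‖s‖) / δ) * δ ^ (k+1) := by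
      field_simp
      ring
  _ ≤ (C * (‖t‖ * ‖s‖) / δ + 1) * δ ^ (k+1) := by
      have : (0:ℝ) < δ ^ (k+1) := pow_pos hδ _
      nlinarith

section Key

private lemma key_right {u v : A} {β : ℂ} (hβ : ‖β‖ ≤ 1)
    (hpow : ∀ n : ℕ, ∃ k : ℕ, (v * u) ^ n = β ^ k • (v ^ n * u ^ n))
    (hu : GSmall (fun n => u ^ n)) : GSmall (fun n => (v * u) ^ n) := by
  apply gsmall_of_pos_bound
  intro δ hδ
  obtain ⟨C, hC1, hC⟩ := hu (δ / (‖v‖ + 1)) (by positivity)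
  refine ⟨C, hC1, fun n hn => ?_⟩
  obtain ⟨k, hk⟩ := hpow n
  have hb : ‖β ^ k‖ ≤ 1 := by
    rw [norm_pow]; exact pow_le_one₀ (norm_nonneg _) hβ
  have h2 : ‖v ^ n * u ^ n‖ ≤ ‖v‖ ^ n * ‖u ^ n‖ := by
    calc ‖v ^ n * u ^ n‖ ≤ ‖v ^ n‖ * ‖u ^ n‖ := norm_mul_le _ _
    _ ≤ ‖v‖ ^ n * ‖u ^ n‖ :=
        mul_le_mul_of_nonneg_right (norm_pow_le' v (by omega)) (norm_nonneg _)
  have h1 : ‖(v * u) ^ n‖ ≤ ‖v‖ ^ n * ‖u ^ n‖ := by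
    rw [hk, norm_smul]
    nlinarith [norm_nonneg (v ^ n * u ^ n), norm_nonneg (β ^ k)]
  have hCu : ‖u ^ n‖ ≤ C * (δ / (‖v‖ + 1)) ^ n := hC n
  calc ‖(v * u) ^ n‖ ≤ ‖v‖ ^ n * ‖u ^ n‖ := h1
  _ ≤ ‖v‖ ^ n * (C * (δ / (‖v‖ + 1)) ^ n) :=
      mul_le_mul_of_nonneg_left hCu (pow_nonneg (norm_nonneg v) n)
  _ = C * ((‖v‖ * (δ / (‖v‖ + 1))) ^ n) := by rw [mul_pow]; ring
  _ ≤ C * δ ^ n := by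
      have hle : ‖v‖ * (δ / (‖v‖ + 1)) ≤ δ := by
        rw [mul_div_assoc', div_le_iff₀ (by positivity)]
        nlinarith [norm_nonneg v]
      have h0 : (0:ℝ) ≤ ‖v‖ * (δ / (‖v‖ + 1)) := by positivity
      exact mul_le_mul_of_nonneg_left (pow_le_pow_left₀ h0 hle n) (by linarith)

private lemma key_left {u v : A} {β : ℂ} (hβ : ‖β‖ ≤ 1)
    (hpow : ∀ n : ℕ, ∃ k : ℕ, (v * u) ^ n = β ^ k • (v ^ n * u ^ n))
    (hv : GSmall (fun n => v ^ n)) : GSmall (fun n => (v * u) ^ n) := by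
  apply gsmall_of_pos_bound
  intro δ hδ
  obtain ⟨C, hC1, hC⟩ := hv (δ / (‖u‖ + 1)) (by positivity)
  refine ⟨C, hC1, fun n hn => ?_⟩
  obtain ⟨k, hk⟩ := hpow n
  have hb : ‖β ^ k‖ ≤ 1 := by
    rw [norm_pow]; exact pow_le_one₀ (norm_nonneg _) hβ
  have h2 : ‖v ^ n * u ^ n‖ ≤ ‖v ^ n‖ * ‖u‖ ^ n := by
    calc ‖v ^ n * u ^ n‖ ≤ ‖v ^ n‖ * ‖u ^ n‖ := norm_mul_le _ _
    _ ≤ ‖v ^ n‖ * ‖u‖ ^ n :=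
        mul_le_mul_of_nonneg_left (norm_pow_le' u (by omega)) (norm_nonneg _)
  have h1 : ‖(v * u) ^ n‖ ≤ ‖v ^ n‖ * ‖u‖ ^ n := by
    rw [hk, norm_smul]
    nlinarith [norm_nonneg (v ^ n * u ^ n), norm_nonneg (β ^ k)]
  have hCv : ‖v ^ n‖ ≤ C * (δ / (‖u‖ + 1)) ^ n := hC n
  calc ‖(v * u) ^ n‖ ≤ ‖v ^ n‖ * ‖u‖ ^ n := h1
  _ ≤ (C * (δ / (‖u‖ + 1)) ^ n) * ‖u‖ ^ n :=
      mul_le_mul_of_nonneg_right hCv (pow_nonneg (norm_nonneg u) n)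
  _ = C * (((δ / (‖u‖ + 1)) * ‖u‖) ^ n) := by rw [mul_pow]; ring
  _ ≤ C * δ ^ n := by
      have hle : (δ / (‖u‖ + 1)) * ‖u‖ ≤ δ := by
        rw [mul_comm, mul_div_assoc', div_le_iff₀ (by positivity)]
        nlinarith [norm_nonneg u]
      have h0 : (0:ℝ) ≤ (δ / (‖u‖ + 1)) * ‖u‖ := by positivity
      exact mul_le_mul_of_nonneg_left (pow_le_pow_left₀ h0 hle n) (by linarith)

end Key

lemma gsmall_twist_prod {s t : A} {γ : ℂ} (hγ : γ ≠ 0) (h : s * t = γ • (t * s))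
    (hs : GSmall (fun n => s ^ n)) :
    GSmall (fun n => (s * t) ^ n) ∧ GSmall (fun n => (t * s) ^ n) := by
  rcases le_or_gt ‖γ‖ 1 with hle | hlt
  · have hts : GSmall (fun n => (t * s) ^ n) := key_right hle (pow_ts h) hs
    exact ⟨gsmall_transfer hts, hts⟩
  · have hst : GSmall (fun n => (s * t) ^ n) := by
      have h' : t * s = γ⁻¹ • (s * t) := twist_symm hγ h
      have hβ : ‖γ⁻¹‖ ≤ 1 := by
        rw [norm_inv, inv_le_one_iff₀]; right; exact hlt.le
      exact key_left hβ (pow_ts h') hs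
    exact ⟨hst, gsmall_transfer hst⟩

lemma pow_add_eq_sum {U V : A} (hUV : U * V = 0) :
    ∀ n : ℕ, (U + V) ^ n = ∑ i ∈ Finset.range (n+1), V ^ i * U ^ (n - i)
  | 0 => by simp
  | (n+1) => by
    have hUjV : ∀ j : ℕ, 1 ≤ j → U ^ j * V = 0 := by
      intro j hj
      obtain ⟨k, rfl⟩ := Nat.exists_eq_add_of_le hj
      rw [add_comm, pow_add, pow_one, mul_assoc, hUV, mul_zero]
    rw [pow_succ, pow_add_eq_sum hUV n]
    calc (∑ i ∈ Finset.range (n+1), V ^ i * U ^ (n - i)) * (U + V)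
        = ∑ i ∈ Finset.range (n+1),
            (V ^ i * U ^ (n - i) * U + V ^ i * U ^ (n - i) * V) := by
          rw [Finset.sum_mul]; exact Finset.sum_congr rfl fun i _ => mul_add _ _ _
      _ = (∑ i ∈ Finset.range (n+1), V ^ i * U ^ (n - i) * U)
          + ∑ i ∈ Finset.range (n+1), V ^ i * U ^ (n - i) * V :=
          Finset.sum_add_distrib
      _ = (∑ i ∈ Finset.range (n+1), V ^ i * U ^ (n + 1 - i)) + V ^ (n+1) := by
          congr 1
          · refine Finset.sum_congr rfl fun i hi => ?_
            have hin : i ≤ n := Nat.lt_succ_iff.1 (Finset.mem_range.1 hi)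
            rw [mul_assoc, ← pow_succ]
            have : n - i + 1 = n + 1 - i := by omega
            rw [this]
          · rw [Finset.sum_range_succ]
            have hz : ∀ i ∈ Finset.range n, V ^ i * U ^ (n - i) * V = 0 := by
              intro i hi
              have h1 : 1 ≤ n - i := by
                have := Finset.mem_range.1 hi; omega
              rw [mul_assoc, hUjV _ h1, mul_zero]
            rw [Finset.sum_eq_zero hz, zero_add, Nat.sub_self, pow_zero, mul_one,
              ← pow_succ]
      _ = ∑ i ∈ Finset.range (n+1+1), V ^ i * U ^ (n + 1 - i) := by
          rw [Finset.sum_range_succ _ (n+1), Nat.sub_self, pow_zero, mul_one]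

lemma gsmall_add {U V : A} (hUV : U * V = 0) (hU : GSmall (fun n => U ^ n))
    (hV : GSmall (fun n => V ^ n)) : GSmall (fun n => (U + V) ^ n) := by
  intro δ hδ
  obtain ⟨C₁, hC₁1, hC₁⟩ := hU (δ/2) (by positivity)
  obtain ⟨C₂, hC₂1, hC₂⟩ := hV (δ/2) (by positivity)
  have hC₁' : ∀ k : ℕ, ‖U ^ k‖ ≤ C₁ * (δ/2) ^ k := fun k => hC₁ k
  have hC₂' : ∀ k : ℕ, ‖V ^ k‖ ≤ C₂ * (δ/2) ^ k := fun k => hC₂ k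
  refine ⟨C₁ * C₂, by nlinarith, fun n => ?_⟩
  show ‖(U + V) ^ n‖ ≤ C₁ * C₂ * δ ^ n
  rw [pow_add_eq_sum hUV n]
  calc ‖∑ i ∈ Finset.range (n+1), V ^ i * U ^ (n - i)‖
      ≤ ∑ i ∈ Finset.range (n+1), ‖V ^ i * U ^ (n - i)‖ := norm_sum_le _ _
    _ ≤ ∑ i ∈ Finset.range (n+1), C₁ * C₂ * (δ/2) ^ n := by
        refine Finset.sum_le_sum fun i hi => ?_
        have hin : i ≤ n := Nat.lt_succ_iff.1 (Finset.mem_range.1 hi)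
        calc ‖V ^ i * U ^ (n - i)‖ ≤ ‖V ^ i‖ * ‖U ^ (n-i)‖ := norm_mul_le _ _
        _ ≤ (C₂ * (δ/2) ^ i) * (C₁ * (δ/2) ^ (n-i)) := by
            have h1 := hC₂' i
            have h2 := hC₁' (n - i)
            have := norm_nonneg (V ^ i)
            have := norm_nonneg (U ^ (n-i))
            nlinarith [pow_nonneg (by positivity : (0:ℝ) ≤ δ/2) i,
              pow_nonneg (by positivity : (0:ℝ) ≤ δ/2) (n-i),
              mul_nonneg (norm_nonneg (V ^ i)) (norm_nonneg (U ^ (n-i)))]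
        _ = C₁ * C₂ * ((δ/2) ^ i * (δ/2) ^ (n-i)) := by ring
        _ = C₁ * C₂ * (δ/2) ^ n := by rw [← pow_add]; congr 2; omega
    _ = (n+1) * (C₁ * C₂ * (δ/2) ^ n) := by
        rw [Finset.sum_const, Finset.card_range, nsmul_eq_mul]; push_cast; ring
    _ ≤ C₁ * C₂ * δ ^ n := by
        have hnat : n + 1 ≤ 2 ^ n := Nat.lt_two_pow_self (n := n)
        have h2 : ((n:ℝ)+1) ≤ 2 ^ n := by exact_mod_cast hnat
        have hδ2 : (0:ℝ) ≤ (δ/2) ^ n := by positivity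
        have heq : (2:ℝ) ^ n * (δ/2) ^ n = δ ^ n := by
          rw [← mul_pow]; ring_nf
        have hCC : (0:ℝ) ≤ C₁ * C₂ := by nlinarith
        have hkey := mul_le_mul_of_nonneg_right h2 (mul_nonneg hCC hδ2)
        nlinarith [hkey]


section GCEPfacts

variable {b x : A}

lemma gcep_F1 (h1 : x = b * x ^ 2) : ∀ n : ℕ, b ^ n * x ^ (n+1) = x
  | 0 => by simpa using h1.symm
  | (n+1) => by
    have e1 : b ^ (n+1) * x ^ (n+2) = b ^ n * (b * x ^ 2) * x ^ n := by
      rw [pow_succ b, show n+2 = 2+n by omega, pow_add x]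
      noncomm_ring
    rw [e1, ← h1, show b ^ n * x * x ^ n = b ^ n * x ^ (n+1) by
      rw [pow_succ' x, mul_assoc]]
    exact gcep_F1 h1 n

lemma gcep_F2 (h1 : x = b * x ^ 2) : ∀ n : ℕ, b ^ (n+1) * x ^ (n+1) = b * x
  | 0 => by simp
  | (n+1) => by
    have e1 : b ^ (n+2) * x ^ (n+2) = b ^ (n+1) * (b * x ^ 2) * x ^ n := by
      rw [pow_succ b (n+1), show n+2 = 2+n by omega, pow_add x]
      noncomm_ring
    rw [e1, ← h1, show b ^ (n+1) * x * x ^ n = b ^ (n+1) * x ^ (n+1) by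
      rw [pow_succ' x, mul_assoc]]
    exact gcep_F2 h1 n

lemma normMulLe' {u v : A} {p q : ℝ} (hu : ‖u‖ ≤ p) (hv : ‖v‖ ≤ q)
    (hp : 0 ≤ p) : ‖u * v‖ ≤ p * q :=
  (norm_mul_le _ _).trans (mul_le_mul hu hv (norm_nonneg _) hp)

lemma gcep_zsmall (hb : IsGCEP b x) : GSmall (fun n => b ^ n - x * b ^ (n+1)) :=
  gsmall_of_tendsto hb.2.2

lemma gcep_F4 (hb : IsGCEP b x) : x * (b * x) = x := by
  have h1 := hb.1
  have hz := gcep_zsmall hb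
  have key : x - x * (b * x) = 0 := by
    apply eq_zero_of_gsmall_bound hz ‖x‖ ‖x‖ (norm_nonneg x)
    intro n hn
    have hide : x - x * (b * x) = (b ^ n - x * b ^ (n+1)) * x ^ (n+1) := by
      rw [sub_mul, gcep_F1 h1 n, mul_assoc, gcep_F2 h1 n]
    rw [hide]
    calc ‖(b ^ n - x * b ^ (n+1)) * x ^ (n+1)‖
        ≤ ‖b ^ n - x * b ^ (n+1)‖ * ‖x ^ (n+1)‖ := norm_mul_le _ _
      _ ≤ ‖b ^ n - x * b ^ (n+1)‖ * ‖x‖ ^ (n+1) :=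
          mul_le_mul_of_nonneg_left (norm_pow_le' x (by omega)) (norm_nonneg _)
      _ = ‖x‖ * (‖b ^ n - x * b ^ (n+1)‖ * ‖x‖ ^ n) := by rw [pow_succ]; ring
  have := sub_eq_zero.1 key
  exact this.symm

lemma gcep_F5 (hb : IsGCEP b x) : x * (b * (b * x)) = b * x := by
  have h1 := hb.1
  have hz := gcep_zsmall hb
  have key : b * x - x * (b * (b * x)) = 0 := by
    apply eq_zero_of_gsmall_bound hz 1 ‖x‖ (norm_nonneg x)
    intro n hn
    obtain ⟨k, rfl⟩ := Nat.exists_eq_add_of_le hn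
    rw [show 1 + k = k + 1 by omega]
    have e2 : b ^ (k+1+1) * x ^ (k+1) = b * (b * x) := by
      rw [pow_succ' b (k+1), mul_assoc, gcep_F2 h1 k]
    have hide : b * x - x * (b * (b * x)) =
        (b ^ (k+1) - x * b ^ (k+1+1)) * x ^ (k+1) := by
      rw [sub_mul, gcep_F2 h1 k, mul_assoc, e2]
    rw [hide]
    calc ‖(b ^ (k+1) - x * b ^ (k+1+1)) * x ^ (k+1)‖
        ≤ ‖b ^ (k+1) - x * b ^ (k+1+1)‖ * ‖x ^ (k+1)‖ := norm_mul_le _ _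
      _ ≤ ‖b ^ (k+1) - x * b ^ (k+1+1)‖ * ‖x‖ ^ (k+1) :=
          mul_le_mul_of_nonneg_left (norm_pow_le' x (by omega)) (norm_nonneg _)
      _ = 1 * (‖b ^ (k+1) - x * b ^ (k+1+1)‖ * ‖x‖ ^ (k+1)) := by ring
  have := sub_eq_zero.1 key
  exact this.symm

lemma gcep_comm {c : A} {ν ρ : ℂ} (hb : IsGCEP b x) (hν : ν ≠ 0) (hρ : ρ ≠ 0)
    (hc1 : c * b = ν • (b * c)) (hc2 : star c * b = ρ • (b * star c)) :
    c * (b * x) = (b * x) * c ∧ c * x = ν⁻¹ • (x * c) := by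
  have h1 := hb.1
  have h2 := hb.2.1
  have hz := gcep_zsmall hb
  -- step 1 : one-sided projection commutation for any twisted-commuting d
  have main13 : ∀ (d : A) (σ : ℂ), d * b = σ • (b * d) →
      d * (b * x) - (b * x) * (d * (b * x)) = 0 := by
    intro d σ hd
    apply eq_zero_of_gsmall_bound hz (‖σ‖ * ‖x‖ * (‖b‖ * ‖d‖)) (‖σ‖ * ‖x‖)
      (by positivity)
    intro n hn
    have hdq : d * (b * x) = σ ^ (n+1) • (b ^ (n+1) * (d * x ^ (n+1))) := by
      calc d * (b * x) = d * (b ^ (n+1) * x ^ (n+1)) := by rw [gcep_F2 h1 n]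
      _ = (d * b ^ (n+1)) * x ^ (n+1) := by rw [mul_assoc]
      _ = (σ ^ (n+1) • (b ^ (n+1) * d)) * x ^ (n+1) := by rw [twist_pow hd (n+1)]
      _ = σ ^ (n+1) • (b ^ (n+1) * (d * x ^ (n+1))) := by
          rw [smul_mul_assoc, mul_assoc]
    have hbz : b * (b ^ n - x * b ^ (n+1)) = b ^ (n+1) - (b * x) * b ^ (n+1) := by
      rw [mul_sub, ← pow_succ', ← mul_assoc]
    have hide : d * (b * x) - (b * x) * (d * (b * x)) =
        σ ^ (n+1) • ((b * (b ^ n - x * b ^ (n+1))) * (d * x ^ (n+1))) := by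
      rw [hdq, mul_smul_comm, ← smul_sub, hbz, sub_mul]
      congr 1
      simp only [mul_assoc]
    rw [hide, norm_smul, norm_pow]
    have hb1 : ‖b * (b ^ n - x * b ^ (n+1))‖ ≤ ‖b‖ * ‖b ^ n - x * b ^ (n+1)‖ :=
      norm_mul_le _ _
    have hb2 : ‖d * x ^ (n+1)‖ ≤ ‖d‖ * ‖x‖ ^ (n+1) :=
      normMulLe' le_rfl (norm_pow_le' x (by omega)) (norm_nonneg d)
    have hb3 : ‖(b * (b ^ n - x * b ^ (n+1))) * (d * x ^ (n+1))‖
        ≤ (‖b‖ * ‖b ^ n - x * b ^ (n+1)‖) * (‖d‖ * ‖x‖ ^ (n+1)) :=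
      normMulLe' hb1 hb2 (by positivity)
    calc ‖σ‖ ^ (n+1) * ‖(b * (b ^ n - x * b ^ (n+1))) * (d * x ^ (n+1))‖
        ≤ ‖σ‖ ^ (n+1) * ((‖b‖ * ‖b ^ n - x * b ^ (n+1)‖) * (‖d‖ * ‖x‖ ^ (n+1))) :=
          mul_le_mul_of_nonneg_left hb3 (by positivity)
      _ = ‖σ‖ * ‖x‖ * (‖b‖ * ‖d‖) * (‖b ^ n - x * b ^ (n+1)‖ * (‖σ‖ * ‖x‖) ^ n) := by
          rw [mul_pow]; ring
  have w1 := main13 c ν hc1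
  have w2 := main13 (star c) ρ hc2
  -- star w2
  have hq : star (b * x) = b * x := h2
  have e1 : star (star c * (b * x)) = (b * x) * c := by
    rw [star_mul, star_star, hq]
  have e2 : star ((b * x) * (star c * (b * x))) = ((b * x) * c) * (b * x) := by
    rw [star_mul, e1, hq]
  have w2' : (b * x) * c - ((b * x) * c) * (b * x) = 0 := by
    have h := congrArg star w2
    rw [star_sub, e1, e2, star_zero] at h
    exact h
  have hA : c * (b * x) = (b * x) * (c * (b * x)) := by
    have := sub_eq_zero.1 w1; exact this
  have hB : (b * x) * c = ((b * x) * c) * (b * x) := by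
    have := sub_eq_zero.1 w2'; exact this
  have hcq : c * (b * x) = (b * x) * c := by
    rw [hA, ← mul_assoc, ← hB]
  refine ⟨hcq, ?_⟩
  -- part 2
  set w : A := c * x - ν⁻¹ • (x * c) with hw
  have hbc : b * c = ν⁻¹ • (c * b) := twist_symm hν hc1
  have hbw : b * w = 0 := by
    rw [hw, mul_sub]
    have t1 : b * (c * x) = ν⁻¹ • (c * (b * x)) := by
      rw [← mul_assoc, hbc, smul_mul_assoc, mul_assoc]
    have t2 : b * (ν⁻¹ • (x * c)) = ν⁻¹ • (c * (b * x)) := by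
      rw [mul_smul_comm, ← mul_assoc, ← hcq]
    rw [t1, t2, sub_self]
  have hqx : (b * x) * x = x := by
    rw [mul_assoc, ← pow_two, ← h1]
  have hqw : (b * x) * w = w := by
    rw [hw, mul_sub]
    have t1 : (b * x) * (c * x) = c * x := by
      rw [← mul_assoc, ← hcq, mul_assoc, hqx]
    have t2 : (b * x) * (ν⁻¹ • (x * c)) = ν⁻¹ • (x * c) := by
      rw [mul_smul_comm, ← mul_assoc, hqx]
    rw [t1, t2]
  have hzero : w = 0 := by
    have hF5 : x * (b * (b * x)) = b * x := gcep_F5 hb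
    calc w = (b * x) * w := hqw.symm
    _ = (x * (b * (b * x))) * w := by rw [hF5]
    _ = x * (b * ((b * x) * w)) := by simp only [mul_assoc]
    _ = x * (b * w) := by rw [hqw]
    _ = 0 := by rw [hbw, mul_zero]
  have := sub_eq_zero.1 hzero
  exact this

end GCEPfacts

lemma tele {c y : A} (h : (y * c) * (c * y) = c * y) :
    ∀ n : ℕ, (c - y * (c * c)) ^ (n+1) = c ^ (n+1) - y * c ^ (n+2)
  | 0 => by
    rw [pow_one, pow_one, pow_two]
  | (n+1) => by
    have key : (c - y * (c * c)) * (y * c) = 0 := by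
      have h' : y * c * (c * y) * c = c * y * c := by rw [h]
      calc (c - y * (c * c)) * (y * c)
          = c * (y * c) - y * (c * c) * (y * c) := by rw [sub_mul]
        _ = c * y * c - y * c * (c * y) * c := by noncomm_ring
        _ = 0 := by rw [h', sub_self]
    rw [pow_succ' (c - y * (c*c)), tele h n, mul_sub]
    have t2 : (c - y * (c * c)) * (y * c ^ (n+2)) = 0 := by
      have e : y * c ^ (n+2) = (y * c) * c ^ (n+1) := by
        rw [pow_succ' c (n+1), ← mul_assoc]
      rw [e, ← mul_assoc, key, zero_mul]
    have t1 : (c - y * (c * c)) * c ^ (n+1) = c ^ (n+2) - y * c ^ (n+3) := by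
      have e3 : y * (c * c) * c ^ (n+1) = y * c ^ (n+3) := by
        rw [mul_assoc y, mul_assoc c, ← pow_succ' c (n+1), ← pow_succ' c (n+2)]
      rw [sub_mul, ← pow_succ' c (n+1), e3]
    rw [t1, t2, sub_zero]
lemma twist_mul_right {u v : A} {γ : ℂ} (h : u * v = γ • (v * u)) (w : A) :
    u * (v * w) = γ • (v * (u * w)) := by
  rw [← mul_assoc, h, smul_mul_assoc, mul_assoc]

theorem stmt5 (a b ag bg : A) (l m : ℂ) (hl : l ≠ 0) (hm : m ≠ 0)
    (ha : IsGCEP a ag) (hb : IsGCEP b bg)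
    (h1 : a * b = l • (b * a)) (h2 : star a * b = m • (b * star a)) :
    IsGCEP (a * b) (bg * ag) ∧ bg * ag = l⁻¹ • (ag * bg) := by
  have hba : b * a = l⁻¹ • (a * b) := twist_symm hl h1
  have hsba0 : star b * a = star m • (a * star b) := by
    have h := congrArg star h2
    rw [star_mul, star_star, star_smul, star_mul, star_star] at h
    exact h
  -- L instance 1 : c = a on (b, bg)
  obtain ⟨haqb, haxb⟩ := gcep_comm hb hl hm h1 h2
  -- L instance 2 : c = star a on (b, bg)
  obtain ⟨hsaqb, hsaxb⟩ := gcep_comm hb hm hl h2 (by rwa [star_star])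
  -- L instance 3 : c = b on (a, ag)
  obtain ⟨hbqa, hbxa0⟩ :=
    gcep_comm ha (inv_ne_zero hl) (star_ne_zero.mpr hm) hba hsba0
  have hbxa : b * ag = l • (ag * b) := by rwa [inv_inv] at hbxa0
  -- L instance 4 : c = bg on (a, ag)
  have hbga : bg * a = l • (a * bg) := by
    have := twist_symm (inv_ne_zero hl) haxb
    rwa [inv_inv] at this
  have hsbga : star bg * a = star (m⁻¹) • (a * star bg) := by
    have h := congrArg star hsaxb
    rw [star_mul, star_star, star_smul, star_mul, star_star] at h
    exact h
  obtain ⟨hxbqa, hxbxa⟩ :=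
    gcep_comm ha hl (star_ne_zero.mpr (inv_ne_zero hm)) hbga hsbga
  -- hxbxa : bg * ag = l⁻¹ • (ag * bg)  (goal (iv))
  -- L instance 5 : c = b * bg on (a, ag)
  obtain ⟨hqbqa, hqbxa0⟩ :=
    gcep_comm ha one_ne_zero one_ne_zero
      (by rw [one_smul]; exact haqb.symm)
      (show star (b*bg) * a = (1:ℂ) • (a * star (b*bg)) by
        rw [hb.2.1, one_smul]; exact haqb.symm)
  have hqbxa : (b * bg) * ag = ag * (b * bg) := by
    rwa [inv_one, one_smul] at hqbxa0
  have hagb : ag * b = l⁻¹ • (b * ag) := twist_symm hl hbxa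
  have hagbg : ag * bg = l • (bg * ag) := by
    have := twist_symm (inv_ne_zero hl) hxbxa
    rwa [inv_inv] at this
  have hag2 : a * ag ^ 2 = ag := ha.1.symm
  have hbg2 : b * bg ^ 2 = bg := hb.1.symm
  -- goal (i)
  have g1 : bg * ag = (a * b) * (bg * ag) ^ 2 := by
    have : (a * b) * (bg * ag) ^ 2 = bg * ag := by
      calc (a*b)*(bg*ag)^2
          = a * (b * (bg * ((ag*bg) * ag))) := by simp only [pow_two, mul_assoc]
        _ = a * (b * (bg * ((l•(bg*ag)) * ag))) := by rw [hagbg]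
        _ = l • (a * ((b * bg^2) * (ag*ag))) := by
            simp only [smul_mul_assoc, mul_smul_comm, pow_two, mul_assoc]
        _ = l • (a * (bg * (ag*ag))) := by rw [hbg2]
        _ = l • ((a * bg) * (ag*ag)) := by rw [mul_assoc]
        _ = l • ((l⁻¹ • (bg * a)) * (ag*ag)) := by rw [haxb]
        _ = bg * (a * ag^2) := by
            simp only [smul_mul_assoc, smul_smul, mul_inv_cancel₀ hl, one_smul,
              pow_two, mul_assoc]
        _ = bg * ag := by rw [hag2]
    exact this.symm
  -- c*y = qb*qa
  have hcy : (a*b)*(bg*ag) = (b*bg)*(a*ag) := by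
    calc (a*b)*(bg*ag) = (a*(b*bg))*ag := by simp only [mul_assoc]
      _ = ((b*bg)*a)*ag := by rw [haqb]
      _ = (b*bg)*(a*ag) := by rw [mul_assoc]
  -- goal (ii)
  have g2 : star ((a*b)*(bg*ag)) = (a*b)*(bg*ag) := by
    rw [hcy, star_mul, ha.2.1, hb.2.1, ← hqbqa]
  -- y*c = eb*ea
  have heab : (ag*a)*b = b*(ag*a) := by
    calc (ag*a)*b = ag*(a*b) := by rw [mul_assoc]
      _ = l • (ag*(b*a)) := by rw [h1, mul_smul_comm]
      _ = l • ((ag*b)*a) := by rw [mul_assoc]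
      _ = l • ((l⁻¹•(b*ag))*a) := by rw [hagb]
      _ = b*(ag*a) := by
          rw [smul_mul_assoc, smul_smul, mul_inv_cancel₀ hl, one_smul, mul_assoc]
  have hyc : (bg*ag)*(a*b) = (bg*b)*(ag*a) := by
    calc (bg*ag)*(a*b) = bg*((ag*a)*b) := by simp only [mul_assoc]
      _ = bg*(b*(ag*a)) := by rw [heab]
      _ = (bg*b)*(ag*a) := by rw [← mul_assoc]
  -- hycy : (y*c)*(c*y) = c*y
  have p3 : (ag*a)*(a*ag) = a*ag := by
    have := gcep_F5 ha
    simpa only [mul_assoc] using this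
  have p2 : (bg*b)*(b*bg) = b*bg := by
    have := gcep_F5 hb
    simpa only [mul_assoc] using this
  have p1 : (ag*a)*((b*bg)*(a*ag)) = (b*bg)*((ag*a)*(a*ag)) := by
    calc (ag*a)*((b*bg)*(a*ag)) = ag*((a*(b*bg))*(a*ag)) := by
          simp only [mul_assoc]
      _ = ag*(((b*bg)*a)*(a*ag)) := by rw [haqb]
      _ = (ag*(b*bg))*(a*(a*ag)) := by simp only [mul_assoc]
      _ = ((b*bg)*ag)*(a*(a*ag)) := by rw [← hqbxa]
      _ = (b*bg)*((ag*a)*(a*ag)) := by simp only [mul_assoc]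
  have hycy : (bg*ag)*(a*b)*((a*b)*(bg*ag)) = (a*b)*(bg*ag) := by
    rw [hyc, hcy]
    calc (bg*b)*(ag*a)*((b*bg)*(a*ag))
        = (bg*b)*((ag*a)*((b*bg)*(a*ag))) := by rw [mul_assoc]
      _ = (bg*b)*((b*bg)*((ag*a)*(a*ag))) := by rw [p1]
      _ = ((bg*b)*(b*bg))*((ag*a)*(a*ag)) := by rw [← mul_assoc]
      _ = (b*bg)*(a*ag) := by rw [p2, p3]
  -- smallness of sa, sb
  have hsa_small : GSmall (fun n => (a - ag*(a*a)) ^ n) := by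
    apply gsmall_congr (gsmall_of_tendsto ha.2.2)
    intro n hn
    obtain ⟨k, rfl⟩ := Nat.exists_eq_add_of_le hn
    rw [show 1+k = k+1 by omega, show k+1+1 = k+2 by omega, tele p3 k]
  have hsb_small : GSmall (fun n => (b - bg*(b*b)) ^ n) := by
    apply gsmall_congr (gsmall_of_tendsto hb.2.2)
    intro n hn
    obtain ⟨k, rfl⟩ := Nat.exists_eq_add_of_le hn
    rw [show 1+k = k+1 by omega, show k+1+1 = k+2 by omega, tele p2 k]
  -- twisted relations for sa, sb
  have hsbA : (b - bg*(b*b)) * a = l⁻¹ • (a * (b - bg*(b*b))) := by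
    have e1 : (b*b)*a = (l⁻¹*l⁻¹) • (a*(b*b)) := by
      rw [mul_assoc, hba, mul_smul_comm, twist_mul_right hba b, smul_smul]
    have e2 : (bg*(b*b))*a = l⁻¹ • (a*(bg*(b*b))) := by
      calc (bg*(b*b))*a = bg*((b*b)*a) := by rw [mul_assoc]
        _ = (l⁻¹*l⁻¹) • (bg*(a*(b*b))) := by rw [e1, mul_smul_comm]
        _ = (l⁻¹*l⁻¹) • ((bg*a)*(b*b)) := by rw [mul_assoc]
        _ = (l⁻¹*l⁻¹*l) • ((a*bg)*(b*b)) := by rw [hbga, smul_mul_assoc, smul_smul]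
        _ = l⁻¹ • (a*(bg*(b*b))) := by
            rw [show (l⁻¹*l⁻¹*l : ℂ) = l⁻¹ by field_simp]
            simp only [mul_assoc]
    rw [sub_mul, hba, e2, ← smul_sub, ← mul_sub]
  have hsaB : (a - ag*(a*a)) * b = l • (b * (a - ag*(a*a))) := by
    have e1 : (a*a)*b = (l*l) • (b*(a*a)) := by
      rw [mul_assoc, h1, mul_smul_comm, twist_mul_right h1 a, smul_smul]
    have e2 : (ag*(a*a))*b = l • (b*(ag*(a*a))) := by
      calc (ag*(a*a))*b = ag*((a*a)*b) := by rw [mul_assoc]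
        _ = (l*l) • (ag*(b*(a*a))) := by rw [e1, mul_smul_comm]
        _ = (l*l) • ((ag*b)*(a*a)) := by rw [mul_assoc]
        _ = (l*l*l⁻¹) • ((b*ag)*(a*a)) := by rw [hagb, smul_mul_assoc, smul_smul]
        _ = l • (b*(ag*(a*a))) := by
            rw [show (l*l*l⁻¹ : ℂ) = l by field_simp]
            simp only [mul_assoc]
    rw [sub_mul, h1, e2, ← smul_sub, ← mul_sub]
  have hxbsa : bg * (a - ag*(a*a)) = l • ((a - ag*(a*a)) * bg) := by
    have e1 : bg*(a*a) = (l*l) • ((a*a)*bg) := by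
      rw [twist_mul_right hbga a, hbga, mul_smul_comm, smul_smul, ← mul_assoc]
    have e2 : bg*(ag*(a*a)) = l • ((ag*(a*a))*bg) := by
      calc bg*(ag*(a*a)) = l⁻¹ • (ag*(bg*(a*a))) := twist_mul_right hxbxa _
        _ = (l⁻¹*(l*l)) • (ag*((a*a)*bg)) := by rw [e1, mul_smul_comm, smul_smul]
        _ = l • ((ag*(a*a))*bg) := by
            rw [show (l⁻¹*(l*l) : ℂ) = l by field_simp]
            simp only [mul_assoc]
    rw [mul_sub, sub_mul, hbga, e2, ← smul_sub]
  have hsat : (a - ag*(a*a)) * (bg*(b*b)) = l • ((bg*(b*b)) * (a - ag*(a*a))) := by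
    have key : (bg*(b*b)) * (a - ag*(a*a)) = l⁻¹ • ((a - ag*(a*a)) * (bg*(b*b))) := by
      have hbsa : b * (a - ag*(a*a)) = l⁻¹ • ((a - ag*(a*a)) * b) :=
        twist_symm hl hsaB
      have e1 : (b*b) * (a - ag*(a*a)) = (l⁻¹*l⁻¹) • ((a - ag*(a*a)) * (b*b)) := by
        rw [mul_assoc, hbsa, mul_smul_comm, twist_mul_right hbsa b, smul_smul]
      calc (bg*(b*b)) * (a - ag*(a*a)) = bg*((b*b)*(a - ag*(a*a))) := by
            rw [mul_assoc]
        _ = (l⁻¹*l⁻¹) • (bg*((a - ag*(a*a))*(b*b))) := by rw [e1, mul_smul_comm]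
        _ = (l⁻¹*l⁻¹) • ((bg*(a - ag*(a*a)))*(b*b)) := by rw [mul_assoc]
        _ = (l⁻¹*l⁻¹*l) • (((a - ag*(a*a))*bg)*(b*b)) := by
            rw [hxbsa, smul_mul_assoc, smul_smul]
        _ = l⁻¹ • ((a - ag*(a*a))*(bg*(b*b))) := by
            rw [show (l⁻¹*l⁻¹*l : ℂ) = l⁻¹ by field_simp]
            simp only [mul_assoc]
    have := twist_symm (inv_ne_zero hl) key
    rwa [inv_inv] at this
  -- sb * bg = 0
  have hsbxb : (b - bg*(b*b)) * bg = 0 := by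
    have h5 := gcep_F5 hb
    rw [sub_mul]
    rw [show bg*(b*b)*bg = bg*(b*(b*bg)) by simp only [mul_assoc], h5, sub_self]
  -- U*V = 0
  have huv : (a*(b - bg*(b*b))) * ((a - ag*(a*a))*(bg*(b*b))) = 0 := by
    rw [hsat]
    rw [show (a*(b - bg*(b*b))) * (l • ((bg*(b*b)) * (a - ag*(a*a))))
        = l • ((a * ((b - bg*(b*b)) * bg)) * ((b*b) * (a - ag*(a*a)))) by
      rw [mul_smul_comm]; congr 1; simp only [mul_assoc]]
    rw [hsbxb, mul_zero, zero_mul, smul_zero]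
  -- decomposition
  have e1w : b*(a*(a*b)) = (l⁻¹*l⁻¹) • (a*(a*(b*b))) := by
    rw [twist_mul_right hba (a*b), twist_mul_right hba b, mul_smul_comm, smul_smul]
  have e3w : bg*(a*(a*(b*b))) = (l*l) • (a*(a*(bg*(b*b)))) := by
    rw [twist_mul_right hbga (a*(b*b)), twist_mul_right hbga (b*b),
      mul_smul_comm, smul_smul]
  have hyc2 : ((bg*b)*(ag*a))*(a*b) = ag*(a*(a*(bg*(b*b)))) := by
    calc ((bg*b)*(ag*a))*(a*b)
        = bg*(b*(ag*(a*(a*b)))) := by simp only [mul_assoc]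
      _ = l • (bg*(ag*(b*(a*(a*b))))) := by
          rw [twist_mul_right hbxa (a*(a*b)), mul_smul_comm]
      _ = (l*(l⁻¹*l⁻¹)) • (bg*(ag*(a*(a*(b*b))))) := by
          rw [e1w, mul_smul_comm, mul_smul_comm, smul_smul]
      _ = (l*(l⁻¹*l⁻¹)*l⁻¹) • (ag*(bg*(a*(a*(b*b))))) := by
          rw [twist_mul_right hxbxa (a*(a*(b*b))), smul_smul]
      _ = (l*(l⁻¹*l⁻¹)*l⁻¹*(l*l)) • (ag*(a*(a*(bg*(b*b))))) := by
          rw [e3w, mul_smul_comm, smul_smul]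
      _ = ag*(a*(a*(bg*(b*b)))) := by
          rw [show l*(l⁻¹*l⁻¹)*l⁻¹*(l*l) = 1 by field_simp, one_smul]
  have hN : a*b - (bg*ag)*((a*b)*(a*b))
      = a*(b - bg*(b*b)) + (a - ag*(a*a))*(bg*(b*b)) := by
    have h' : (bg*ag)*((a*b)*(a*b)) = ag*(a*(a*(bg*(b*b)))) := by
      calc (bg*ag)*((a*b)*(a*b)) = ((bg*ag)*(a*b))*(a*b) := by rw [← mul_assoc]
        _ = ((bg*b)*(ag*a))*(a*b) := by rw [hyc]
        _ = ag*(a*(a*(bg*(b*b)))) := hyc2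
    rw [h']
    noncomm_ring
  -- smallness of N
  have hU : GSmall (fun n => (a*(b - bg*(b*b))) ^ n) :=
    (gsmall_twist_prod (inv_ne_zero hl) hsbA hsb_small).2
  have hV : GSmall (fun n => ((a - ag*(a*a))*(bg*(b*b))) ^ n) :=
    (gsmall_twist_prod hl hsat hsa_small).1
  have hNsmall : GSmall (fun n => (a*b - (bg*ag)*((a*b)*(a*b))) ^ n) := by
    rw [hN]
    exact gsmall_add huv hU hV
  -- goal (iii)
  have g3 : Tendsto
      (fun n : ℕ => ‖(a*b) ^ n - (bg*ag) * (a*b) ^ (n+1)‖ ^ ((1:ℝ)/n))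
      atTop (𝓝 0) := by
    have hT := tendsto_of_gsmall hNsmall
    apply hT.congr'
    filter_upwards [eventually_ge_atTop 1] with n hn
    obtain ⟨k, rfl⟩ := Nat.exists_eq_add_of_le hn
    rw [show 1+k = k+1 by omega]
    congr 2
    rw [tele hycy k, show k+1+1 = k+2 by omega]
  exact ⟨⟨g1, g2, g3⟩, hxbxa⟩
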